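/- Let l > 0 and let φ ∈ H¹₀(0,1), ψ ∈ H¹(0,1), w ∈ H¹(0,1) be real-valued functions such that ψ and w have zero mean on (0,1). If ‖φ' + ψ + l·w‖²_{L²} = 0, ‖ψ'‖²_{L²} = 0 and ‖w' − l·φ‖²_{L²} = 0, then ψ = 0 and there exists a constant c such that φ(x) = −c·sin(l·x) and w(x) = c·cos(l·x), where moreover c = 0 or l = m₀π for some integer m₀. -/

import Mathlib

open Real MeasureTheory intervalIntegral

private lemma sq_int_zero' {f : ℝ → ℝ} (hf : ContinuousOn f (Set.Icc 0 1))
    (h : ∫ x in (0:ℝ)..1, (f x)^2 = 0) : ∀ x ∈ Set.Icc (0:ℝ) 1, f x = 0 := by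
  have hsq : ContinuousOn (fun x => (f x)^2) (Set.Icc (0:ℝ) 1) := hf.pow 2
  have hint : IntervalIntegrable (fun x => (f x)^2) volume 0 1 := by
    apply ContinuousOn.intervalIntegrable
    rwa [Set.uIcc_of_le (by norm_num)]
  have hae := (intervalIntegral.integral_eq_zero_iff_of_le_of_nonneg_ae (by norm_num)
    (Filter.Eventually.of_forall fun x => sq_nonneg _) hint).1 h
  rw [MeasureTheory.restrict_Ioc_eq_restrict_Icc] at hae
  have heq : Set.EqOn (fun x => (f x)^2) 0 (Set.Icc (0:ℝ) 1) :=
    Measure.eqOn_Icc_of_ae_eq volume (by norm_num) hae hsq continuousOn_const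
  intro x hx
  have := heq hx
  simpa [pow_eq_zero_iff] using this

/-- Kernel of the energy seminorm of the Bresse system. -/
theorem bresse_energy_kernel
    (l : ℝ) (hl : 0 < l)
    (φ ψ w φ' ψ' w' : ℝ → ℝ)
    (hφ : ∀ x ∈ Set.Icc (0:ℝ) 1, HasDerivAt φ (φ' x) x)
    (hψ : ∀ x ∈ Set.Icc (0:ℝ) 1, HasDerivAt ψ (ψ' x) x)
    (hw : ∀ x ∈ Set.Icc (0:ℝ) 1, HasDerivAt w (w' x) x)
    (hφc : ContinuousOn φ' (Set.Icc 0 1))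
    (hψc : ContinuousOn ψ' (Set.Icc 0 1))
    (hwc : ContinuousOn w' (Set.Icc 0 1))
    (hφ0 : φ 0 = 0) (hφ1 : φ 1 = 0)
    (hψm : ∫ x in (0:ℝ)..1, ψ x = 0)
    (hwm : ∫ x in (0:ℝ)..1, w x = 0)
    (h1 : ∫ x in (0:ℝ)..1, (φ' x + ψ x + l * w x)^2 = 0)
    (h2 : ∫ x in (0:ℝ)..1, (ψ' x)^2 = 0)
    (h3 : ∫ x in (0:ℝ)..1, (w' x - l * φ x)^2 = 0) :
    (∀ x ∈ Set.Icc (0:ℝ) 1, ψ x = 0) ∧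
    ∃ c : ℝ, (∀ x ∈ Set.Icc (0:ℝ) 1,
        φ x = -c * Real.sin (l * x) ∧ w x = c * Real.cos (l * x)) ∧
      (c = 0 ∨ ∃ m₀ : ℤ, l = m₀ * Real.pi) := by
  have h01 : (0:ℝ) ∈ Set.Icc (0:ℝ) 1 := by norm_num
  have h11 : (1:ℝ) ∈ Set.Icc (0:ℝ) 1 := by norm_num
  -- continuity of the functions themselves
  have hψcont : ContinuousOn ψ (Set.Icc 0 1) :=
    fun x hx => (hψ x hx).continuousAt.continuousWithinAt
  have hφcont : ContinuousOn φ (Set.Icc 0 1) :=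
    fun x hx => (hφ x hx).continuousAt.continuousWithinAt
  have hwcont : ContinuousOn w (Set.Icc 0 1) :=
    fun x hx => (hw x hx).continuousAt.continuousWithinAt
  -- ψ' = 0 on [0,1]
  have hψ'0 : ∀ x ∈ Set.Icc (0:ℝ) 1, ψ' x = 0 := sq_int_zero' hψc h2
  -- ψ constant
  have hψconst : ∀ x ∈ Set.Icc (0:ℝ) 1, ψ x = ψ 0 := by
    apply constant_of_has_deriv_right_zero hψcont
    intro x hx
    have := (hψ x (Set.Ico_subset_Icc_self hx)).hasDerivWithinAt (s := Set.Ici x)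
    rwa [hψ'0 x (Set.Ico_subset_Icc_self hx)] at this
  -- ψ 0 = 0 from zero mean
  have hψ00 : ψ 0 = 0 := by
    have : ∫ x in (0:ℝ)..1, ψ x = ∫ x in (0:ℝ)..1, ψ 0 := by
      apply intervalIntegral.integral_congr
      intro x hx
      rw [Set.uIcc_of_le (by norm_num : (0:ℝ) ≤ 1)] at hx
      exact hψconst x hx
    simp only [intervalIntegral.integral_const, smul_eq_mul, sub_zero, one_mul] at this
    rw [hψm] at this
    linarith
  have hψ0 : ∀ x ∈ Set.Icc (0:ℝ) 1, ψ x = 0 := fun x hx => (hψconst x hx).trans hψ00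
  refine ⟨hψ0, ?_⟩
  -- φ' = -(l w), w' = l φ on [0,1]
  have hc1 : ContinuousOn (fun x => φ' x + ψ x + l * w x) (Set.Icc 0 1) :=
    (hφc.add hψcont).add (continuousOn_const.mul hwcont)
  have hc3 : ContinuousOn (fun x => w' x - l * φ x) (Set.Icc 0 1) :=
    hwc.sub (continuousOn_const.mul hφcont)
  have hφ'eq : ∀ x ∈ Set.Icc (0:ℝ) 1, φ' x = -(l * w x) := by
    intro x hx
    have := sq_int_zero' hc1 h1 x hx
    have hz := hψ0 x hx
    linarith
  have hw'eq : ∀ x ∈ Set.Icc (0:ℝ) 1, w' x = l * φ x := by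
    intro x hx
    have := sq_int_zero' hc3 h3 x hx
    linarith
  -- the two conserved quantities
  set F : ℝ → ℝ := fun x => φ x * Real.cos (l * x) + w x * Real.sin (l * x) with hF
  set G : ℝ → ℝ := fun x => -(φ x) * Real.sin (l * x) + w x * Real.cos (l * x) with hG
  have hlx : ∀ x : ℝ, HasDerivAt (fun y => l * y) l x := by
    intro x
    simpa using (hasDerivAt_id x).const_mul l
  have hFd : ∀ x ∈ Set.Icc (0:ℝ) 1, HasDerivAt F 0 x := by
    intro x hx
    have hd : HasDerivAt F (φ' x * Real.cos (l * x) + φ x * (-Real.sin (l * x) * l)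
        + (w' x * Real.sin (l * x) + w x * (Real.cos (l * x) * l))) x :=
      ((hφ x hx).mul ((hlx x).cos)).add ((hw x hx).mul ((hlx x).sin))
    have : φ' x * Real.cos (l * x) + φ x * (-Real.sin (l * x) * l)
        + (w' x * Real.sin (l * x) + w x * (Real.cos (l * x) * l)) = 0 := by
      rw [hφ'eq x hx, hw'eq x hx]; ring
    rwa [this] at hd
  have hGd : ∀ x ∈ Set.Icc (0:ℝ) 1, HasDerivAt G 0 x := by
    intro x hx
    have hd : HasDerivAt G ((-(φ' x)) * Real.sin (l * x) + (-(φ x)) * (Real.cos (l * x) * l)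
        + (w' x * Real.cos (l * x) + w x * (-Real.sin (l * x) * l))) x :=
      (((hφ x hx).neg).mul ((hlx x).sin)).add ((hw x hx).mul ((hlx x).cos))
    have : (-(φ' x)) * Real.sin (l * x) + (-(φ x)) * (Real.cos (l * x) * l)
        + (w' x * Real.cos (l * x) + w x * (-Real.sin (l * x) * l)) = 0 := by
      rw [hφ'eq x hx, hw'eq x hx]; ring
    rwa [this] at hd
  have hFcont : ContinuousOn F (Set.Icc 0 1) :=
    fun x hx => ((hFd x hx).continuousAt).continuousWithinAt
  have hGcont : ContinuousOn G (Set.Icc 0 1) :=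
    fun x hx => ((hGd x hx).continuousAt).continuousWithinAt
  have hFconst : ∀ x ∈ Set.Icc (0:ℝ) 1, F x = F 0 :=
    constant_of_has_deriv_right_zero hFcont
      (fun x hx => (hFd x (Set.Ico_subset_Icc_self hx)).hasDerivWithinAt)
  have hGconst : ∀ x ∈ Set.Icc (0:ℝ) 1, G x = G 0 :=
    constant_of_has_deriv_right_zero hGcont
      (fun x hx => (hGd x (Set.Ico_subset_Icc_self hx)).hasDerivWithinAt)
  have hF0 : F 0 = 0 := by simp [hF, hφ0]
  have hG0 : G 0 = w 0 := by simp [hG, hφ0]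
  refine ⟨w 0, ?_, ?_⟩
  · intro x hx
    have hFx : φ x * Real.cos (l * x) + w x * Real.sin (l * x) = 0 := by
      have := hFconst x hx; rw [hF0] at this; simpa [hF] using this
    have hGx : -(φ x) * Real.sin (l * x) + w x * Real.cos (l * x) = w 0 := by
      have := hGconst x hx; rw [hG0] at this; simpa [hG] using this
    have key : Real.sin (l * x) ^ 2 + Real.cos (l * x) ^ 2 = 1 := Real.sin_sq_add_cos_sq _
    constructor
    · linear_combination Real.cos (l * x) * hFx - Real.sin (l * x) * hGx - φ x * key
    · linear_combination Real.sin (l * x) * hFx + Real.cos (l * x) * hGx - w x * key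
  · -- from φ 1 = 0 : -(w 0) * sin l = 0
    have hFx : φ 1 * Real.cos (l * 1) + w 1 * Real.sin (l * 1) = 0 := by
      have := hFconst 1 h11; rw [hF0] at this; simpa [hF] using this
    have hGx : -(φ 1) * Real.sin (l * 1) + w 1 * Real.cos (l * 1) = w 0 := by
      have := hGconst 1 h11; rw [hG0] at this; simpa [hG] using this
    have key : Real.sin (l * 1) ^ 2 + Real.cos (l * 1) ^ 2 = 1 := Real.sin_sq_add_cos_sq _
    have hφ1' : -(w 0) * Real.sin (l * 1) = 0 := by
      have : φ 1 = -(w 0) * Real.sin (l * 1) := by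
        linear_combination Real.cos (l * 1) * hFx - Real.sin (l * 1) * hGx - φ 1 * key
      linarith [this, hφ1]
    rcases mul_eq_zero.1 hφ1' with hc | hs
    · exact Or.inl (by linarith [neg_eq_zero.1 hc])
    · right
      rw [mul_one] at hs
      obtain ⟨n, hn⟩ := Real.sin_eq_zero_iff.1 hs
      exact ⟨n, hn.symm⟩
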